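/- arXiv:1404.6633 — 2 statements merged into one kernel-verified Lean document; each statement's English description precedes it below -/
import Mathlib

section
/- Let F^y be the standard Marčenko–Pastur distribution with index y ∈ (0,1), with density (2πxy)⁻¹√((b−x)(x−a)) on [a,b] where a=(1−√y)², b=(1+√y)². Then ∫ log x dF^y(x) = −1 + ((y−1)/y)·log(1−y). -/
open Real MeasureTheory Set Metric

noncomputable section
namespace MPLogAux

/-- The analytic building block `log(1-sz)/(1-sz)`. -/
def hfun (s : ℝ) : ℂ → ℂ := fun z => Complex.log (1 - s * z) / (1 - s * z)

variable {s : ℝ}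

lemma re_pos (hs0 : 0 < s) (hs1 : s < 1) {z : ℂ} (hz : ‖z‖ ≤ 1) :
    0 < (1 - (s : ℂ) * z).re := by
  have h1 : z.re ≤ 1 := le_trans (le_trans (le_abs_self _) (Complex.abs_re_le_norm z)) hz
  have h2 : -1 ≤ z.re := by
    have := le_trans (le_trans (le_abs_self _) (Complex.abs_re_le_norm z)) hz
    have h3 : |z.re| ≤ 1 := le_trans (Complex.abs_re_le_norm z) hz
    linarith [abs_le.1 h3 |>.1]
  simp only [Complex.sub_re, Complex.one_re, Complex.mul_re, Complex.ofReal_re,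
    Complex.ofReal_im, zero_mul, sub_zero]
  nlinarith

lemma ne_zero' (hs0 : 0 < s) (hs1 : s < 1) {z : ℂ} (hz : ‖z‖ ≤ 1) :
    (1 - (s : ℂ) * z) ≠ 0 := by
  intro h
  have := re_pos hs0 hs1 hz
  rw [h] at this; simp at this

lemma mem_slit (hs0 : 0 < s) (hs1 : s < 1) {z : ℂ} (hz : ‖z‖ ≤ 1) :
    (1 - (s : ℂ) * z) ∈ Complex.slitPlane :=
  Complex.mem_slitPlane_iff.2 (Or.inl (re_pos hs0 hs1 hz))

lemma hfun_diff (hs0 : 0 < s) (hs1 : s < 1) {z : ℂ} (hz : ‖z‖ ≤ 1) :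
    DifferentiableAt ℂ (hfun s) z := by
  have hu : DifferentiableAt ℂ (fun z : ℂ => 1 - (s : ℂ) * z) z :=
    (differentiableAt_const _).sub (differentiableAt_id.const_mul _)
  have hlog : DifferentiableAt ℂ (fun z : ℂ => Complex.log (1 - (s : ℂ) * z)) z :=
    by have := (Complex.differentiableAt_log (mem_slit hs0 hs1 hz)).comp z hu; exact this
  exact hlog.div hu (ne_zero' hs0 hs1 hz)

lemma hfun_analytic (hs0 : 0 < s) (hs1 : s < 1) {z : ℂ} (hz : ‖z‖ ≤ 1) :
    AnalyticAt ℂ (hfun s) z := by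
  have hu : AnalyticAt ℂ (fun z : ℂ => 1 - (s : ℂ) * z) z :=
    analyticAt_const.sub (analyticAt_const.mul analyticAt_id)
  exact (hu.clog (mem_slit hs0 hs1 hz)).div hu (ne_zero' hs0 hs1 hz)

lemma hfun_zero : hfun s 0 = 0 := by simp [hfun]

lemma hfun_deriv0 (hs0 : 0 < s) (hs1 : s < 1) : deriv (hfun s) 0 = -(s : ℂ) := by
  have hu : HasDerivAt (fun z : ℂ => 1 - (s : ℂ) * z) (-(s : ℂ)) 0 := by
    simpa using ((hasDerivAt_id (0 : ℂ)).const_mul (s : ℂ)).const_sub 1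
  have hone : (1 - (s : ℂ) * 0) ∈ Complex.slitPlane := by
    simpa using Complex.one_mem_slitPlane
  have hlog : HasDerivAt (fun z : ℂ => Complex.log (1 - (s : ℂ) * z))
      ((1 - (s : ℂ) * 0)⁻¹ * -(s : ℂ)) 0 := by have := (Complex.hasDerivAt_log hone).comp 0 hu; exact this
  have hne : (1 - (s : ℂ) * 0) ≠ 0 := by simpa using one_ne_zero
  have : deriv (fun z => Complex.log (1 - (s : ℂ) * z) / (1 - (s : ℂ) * z)) 0 = _ := (hlog.div hu hne).deriv
  rw [show (hfun s) = fun z => Complex.log (1 - (s : ℂ) * z) / (1 - (s : ℂ) * z) from rfl, this]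
  simp [Complex.log_one]

lemma analyticAt_dslope_center {f : ℂ → ℂ} {c : ℂ} (hf : AnalyticAt ℂ f c) :
    AnalyticAt ℂ (dslope f c) c := by
  obtain ⟨p, hp⟩ := hf
  exact ⟨_, hp.has_fpower_series_dslope_fslope⟩

lemma alg (z sc L M : ℂ) (hz0 : z ≠ 0) (hzs : z - sc ≠ 0) (hden : 1 - sc*z ≠ 0)
    (hsc : sc ≠ 0) :
    (Complex.I/4) * ((z^2-1)^2 * L / (z^2*(z-sc)*(1-sc*z))) =
    (Complex.I/4) * ((z+sc)*(L/(1-sc*z)) - sc⁻¹^2*((L/(1-sc*z))/z)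
      - sc⁻¹*(((L/(1-sc*z))/z + sc)/z) + ((sc^2-1)^2/sc^2)*(((L/(1-sc*z)) - M)/(z-sc)))
    + (Complex.I/4)*(z-0)⁻¹ + ((Complex.I/4)*((sc^2-1)^2/sc^2)*M)*(z-sc)⁻¹ := by
  have ha : z * z⁻¹ = 1 := mul_inv_cancel₀ hz0
  have hd : sc * sc⁻¹ = 1 := mul_inv_cancel₀ hsc
  have hX : (z - sc) * (z - sc)⁻¹ = 1 := mul_inv_cancel₀ hzs
  simp only [div_eq_mul_inv, mul_inv, ← inv_pow, sub_zero]
  linear_combination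
    ((Complex.I/4) * L * (1-sc*z)⁻¹ *
      (-(sc⁻¹^2*z⁻¹) + (z-sc)⁻¹*(z^2-2+sc⁻¹^2)*(1+z*z⁻¹))) * ha
    + ((Complex.I/4) * (L * (1-sc*z)⁻¹ *
      (-(sc⁻¹*z⁻¹^2) - (z-sc)⁻¹*(sc^2-2+z⁻¹^2)*(1+sc*sc⁻¹)) + z⁻¹)) * hd
    + ((Complex.I/4) * L * (1-sc*z)⁻¹ * ((z+sc)*(1-z⁻¹^2*sc⁻¹^2))) * hX

lemma circleIntegral_add' {f g : ℂ → ℂ} {c : ℂ} {R : ℝ} (hf : CircleIntegrable f c R)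
    (hg : CircleIntegrable g c R) :
    (∮ z in C(c, R), (f z + g z)) = (∮ z in C(c, R), f z) + (∮ z in C(c, R), g z) := by
  simp only [circleIntegral, smul_add]
  exact intervalIntegral.integral_add ((circleIntegrable_iff R).1 hf)
    ((circleIntegrable_iff R).1 hg)

set_option maxHeartbeats 1600000 in
/-- Residue evaluation of the key contour integral. -/
lemma circle_eval (hs0 : 0 < s) (hs1 : s < 1) :
    (∮ z in C((0:ℂ), 1),
      (Complex.I/4) * ((z^2 - 1)^2 * Complex.log (1 - (s:ℂ) * z) /
        (z^2 * (z - (s:ℂ)) * (1 - (s:ℂ) * z))))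
      = ((-(π/2) * (1 + (1 - s^2) * Real.log (1 - s^2) / s^2) : ℝ) : ℂ) := by
  have hsc : (s : ℂ) ≠ 0 := Complex.ofReal_ne_zero.2 hs0.ne'
  have habs_s : ‖(s : ℂ)‖ = s := by
    rw [Complex.norm_real, Real.norm_eq_abs, abs_of_pos hs0]
  have habs_s1 : ‖(s : ℂ)‖ ≤ 1 := by rw [habs_s]; linarith
  have hs2pos : (0:ℝ) < 1 - s^2 := by nlinarith
  set C : ℂ := ((s:ℂ)^2 - 1)^2 / (s:ℂ)^2 with hC
  set Ψ : ℂ → ℂ := fun z => (Complex.I/4) * ((z + (s:ℂ)) * hfun s z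
      - ((s:ℂ))⁻¹^2 * dslope (hfun s) 0 z
      - ((s:ℂ))⁻¹ * dslope (dslope (hfun s) 0) 0 z
      + C * dslope (hfun s) (s:ℂ) z) with hΨ
  -- differentiability of Ψ on the closed unit ball
  have hΨdiff : ∀ z ∈ closedBall (0:ℂ) 1, DifferentiableAt ℂ Ψ z := by
    intro z hz
    have habs : ‖z‖ ≤ 1 := by
      simpa [Complex.dist_eq] using mem_closedBall.1 hz
    have t1 : DifferentiableAt ℂ (fun z => (z + (s:ℂ)) * hfun s z) z :=
      (differentiableAt_id.add_const _).mul (hfun_diff hs0 hs1 habs)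
    have t2 : ∀ w : ℂ, ‖w‖ ≤ 1 → DifferentiableAt ℂ (dslope (hfun s) 0) w := by
      intro w hw
      rcases eq_or_ne w 0 with rfl | hne
      · exact (analyticAt_dslope_center (hfun_analytic hs0 hs1 (by simp))).differentiableAt
      · exact (differentiableAt_dslope_of_ne hne).2 (hfun_diff hs0 hs1 hw)
    have t3 : DifferentiableAt ℂ (dslope (dslope (hfun s) 0) 0) z := by
      rcases eq_or_ne z 0 with rfl | hne
      · exact (analyticAt_dslope_center (analyticAt_dslope_center
          (hfun_analytic hs0 hs1 (by simp)))).differentiableAt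
      · exact (differentiableAt_dslope_of_ne hne).2 (t2 z habs)
    have t4 : DifferentiableAt ℂ (dslope (hfun s) (s:ℂ)) z := by
      rcases eq_or_ne z (s:ℂ) with rfl | hne
      · exact (analyticAt_dslope_center (hfun_analytic hs0 hs1 habs_s1)).differentiableAt
      · exact (differentiableAt_dslope_of_ne hne).2 (hfun_diff hs0 hs1 habs)
    exact (((t1.sub ((t2 z habs).const_mul _)).sub (t3.const_mul _)).add
      (t4.const_mul _)).const_mul _
  have hΨzero : (∮ z in C((0:ℂ), 1), Ψ z) = 0 := by
    refine Complex.circleIntegral_eq_zero_of_differentiable_on_off_countable zero_le_one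
      countable_empty (fun z hz => (hΨdiff z hz).continuousAt.continuousWithinAt) ?_
    exact fun z hz => hΨdiff z (ball_subset_closedBall hz.1)
  -- the decomposition on the unit sphere
  have hEq : EqOn (fun z : ℂ => (Complex.I/4) * ((z^2 - 1)^2 * Complex.log (1 - (s:ℂ) * z) /
        (z^2 * (z - (s:ℂ)) * (1 - (s:ℂ) * z))))
      (fun z : ℂ => Ψ z + (Complex.I/4) * (z - 0)⁻¹
        + ((Complex.I/4) * C * hfun s (s:ℂ)) * (z - (s:ℂ))⁻¹) (sphere (0:ℂ) 1) := by
    intro z hz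
    have habs : ‖z‖ = 1 := by simpa [Complex.dist_eq] using mem_sphere.1 hz
    have hz0 : z ≠ 0 := by
      intro h; rw [h] at habs; simp at habs
    have hzs : z - (s:ℂ) ≠ 0 := by
      intro h
      have : z = (s:ℂ) := sub_eq_zero.1 h
      rw [this, habs_s] at habs; linarith
    have hden : (1 - (s:ℂ) * z) ≠ 0 := ne_zero' hs0 hs1 habs.le
    have hd1 : dslope (hfun s) 0 z = hfun s z / z := by
      rw [dslope_of_ne _ hz0, slope_def_field, hfun_zero]; simp
    have hd2 : dslope (dslope (hfun s) 0) 0 z = (hfun s z / z + (s:ℂ)) / z := by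
      rw [dslope_of_ne _ hz0, slope_def_field, hd1, dslope_same, hfun_deriv0 hs0 hs1]
      ring
    have hd3 : dslope (hfun s) (s:ℂ) z = (hfun s z - hfun s (s:ℂ)) / (z - (s:ℂ)) := by
      rw [dslope_of_ne _ (sub_ne_zero.1 hzs), slope_def_field]
    simp only [hΨ, hd1, hd2, hd3, hC]
    rw [show hfun s z = Complex.log (1 - (s:ℂ) * z) / (1 - (s:ℂ) * z) from rfl]
    exact alg z (s:ℂ) (Complex.log (1 - (s:ℂ) * z)) (hfun s (s:ℂ)) hz0 hzs hden hsc
  rw [circleIntegral.integral_congr zero_le_one hEq]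
  -- split the integral
  have hint1 : CircleIntegrable Ψ (0:ℂ) 1 :=
    ContinuousOn.circleIntegrable zero_le_one
      (fun z hz => ((hΨdiff z (sphere_subset_closedBall hz)).continuousAt).continuousWithinAt)
  have hint2 : CircleIntegrable (fun z : ℂ => (Complex.I/4) * (z - 0)⁻¹) (0:ℂ) 1 := by
    refine ContinuousOn.circleIntegrable zero_le_one ?_
    refine (continuousOn_const.mul ((continuousOn_id.sub continuousOn_const).inv₀ ?_))
    intro z hz
    have habs : ‖z‖ = 1 := by simpa [Complex.dist_eq] using mem_sphere.1 hz
    show z - 0 ≠ 0; rw [sub_zero]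
    intro h; rw [h] at habs; simp at habs
  have hint3 : CircleIntegrable (fun z : ℂ => ((Complex.I/4) * C * hfun s (s:ℂ)) * (z - (s:ℂ))⁻¹)
      (0:ℂ) 1 := by
    refine ContinuousOn.circleIntegrable zero_le_one ?_
    refine (continuousOn_const.mul ((continuousOn_id.sub continuousOn_const).inv₀ ?_))
    intro z hz
    have habs : ‖z‖ = 1 := by simpa [Complex.dist_eq] using mem_sphere.1 hz
    show z - (s:ℂ) ≠ 0
    intro h
    have : z = (s:ℂ) := sub_eq_zero.1 h
    rw [this, habs_s] at habs; linarith
  have hsplit : (∮ z in C((0:ℂ), 1), (Ψ z + (Complex.I/4) * (z - 0)⁻¹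
        + ((Complex.I/4) * C * hfun s (s:ℂ)) * (z - (s:ℂ))⁻¹))
      = (∮ z in C((0:ℂ), 1), Ψ z) + (∮ z in C((0:ℂ), 1), (Complex.I/4) * (z - 0)⁻¹)
        + (∮ z in C((0:ℂ), 1), ((Complex.I/4) * C * hfun s (s:ℂ)) * (z - (s:ℂ))⁻¹) := by
    have hint12 : CircleIntegrable (fun z : ℂ => Ψ z + (Complex.I/4) * (z - 0)⁻¹) (0:ℂ) 1 :=
      hint1.add hint2
    rw [circleIntegral_add' hint12 hint3, circleIntegral_add' hint1 hint2]
  rw [hsplit, hΨzero]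
  have h0mem : (0:ℂ) ∈ ball (0:ℂ) 1 := mem_ball_self one_pos
  have hsmem : (s:ℂ) ∈ ball (0:ℂ) 1 := by
    rw [mem_ball, Complex.dist_eq]; simpa [habs_s, abs_of_pos hs0] using hs1
  have e1 : (∮ z in C((0:ℂ), 1), (Complex.I/4) * (z - 0)⁻¹)
      = (Complex.I/4) * (2 * π * Complex.I) := by
    have := circleIntegral.integral_sub_inv_of_mem_ball h0mem
    rw [show (fun z : ℂ => (Complex.I/4) * (z - 0)⁻¹)
        = fun z : ℂ => (Complex.I/4) • (z - 0)⁻¹ from rfl]  -- smul_eq_mul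
    rw [circleIntegral.integral_smul]
    rw [this]; simp [smul_eq_mul]
  have e2 : (∮ z in C((0:ℂ), 1), ((Complex.I/4) * C * hfun s (s:ℂ)) * (z - (s:ℂ))⁻¹)
      = ((Complex.I/4) * C * hfun s (s:ℂ)) * (2 * π * Complex.I) := by
    have := circleIntegral.integral_sub_inv_of_mem_ball hsmem
    rw [show (fun z : ℂ => ((Complex.I/4) * C * hfun s (s:ℂ)) * (z - (s:ℂ))⁻¹)
        = fun z : ℂ => ((Complex.I/4) * C * hfun s (s:ℂ)) • (z - (s:ℂ))⁻¹ from rfl]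
    rw [circleIntegral.integral_smul, this]; simp [smul_eq_mul]
  rw [e1, e2]
  -- final arithmetic
  have hM : hfun s (s:ℂ) = ((Real.log (1 - s^2) / (1 - s^2) : ℝ) : ℂ) := by
    rw [show hfun s (s:ℂ) = Complex.log (1 - (s:ℂ) * (s:ℂ)) / (1 - (s:ℂ) * (s:ℂ)) from rfl]
    have : (1 - (s:ℂ) * (s:ℂ)) = ((1 - s^2 : ℝ) : ℂ) := by push_cast; ring
    rw [this, ← Complex.ofReal_log hs2pos.le]
    push_cast
    ring
  rw [hM, hC]
  have hs2c : ((1:ℂ) - (s:ℂ)^2) ≠ 0 := by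
    have : ((1 - s^2 : ℝ) : ℂ) ≠ 0 := Complex.ofReal_ne_zero.2 hs2pos.ne'
    push_cast at this; exact this
  have hII : Complex.I * Complex.I = -1 := Complex.I_mul_I
  have hb : ((1:ℂ) - (s:ℂ)^2) * ((1:ℂ) - (s:ℂ)^2)⁻¹ = 1 := mul_inv_cancel₀ hs2c
  push_cast
  simp only [div_eq_mul_inv, mul_inv, ← inv_pow]
  linear_combination
    (((π:ℂ)/2) * (1 + ((s:ℂ)^2-1)^2 * (s:ℂ)⁻¹^2 * ((Real.log (1-s^2) : ℝ) : ℂ)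
      * ((1:ℂ)-(s:ℂ)^2)⁻¹)) * hII
    + (-(((π:ℂ)/2)) * (s:ℂ)⁻¹^2 * ((Real.log (1-s^2) : ℝ) : ℂ) * ((1:ℂ)-(s:ℂ)^2)) * hb
lemma param (hs0 : 0 < s) (hs1 : s < 1) :
    (∫ θ in (0:ℝ)..(2*π), (((Real.sin θ)^2 / (1 + s^2 - 2*s*Real.cos θ) : ℝ) : ℂ)
        * Complex.log (1 - (s:ℂ) * Complex.exp (θ * Complex.I)))
      = ∮ z in C((0:ℂ), 1), (Complex.I/4) * ((z^2 - 1)^2 * Complex.log (1 - (s:ℂ) * z) /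
          (z^2 * (z - (s:ℂ)) * (1 - (s:ℂ) * z))) := by
  rw [circleIntegral]
  refine (intervalIntegral.integral_congr fun θ hθ => ?_).symm
  simp only [deriv_circleMap, smul_eq_mul]
  have hcm : circleMap 0 1 θ = Complex.exp (θ * Complex.I) := by
    simp [circleMap]
  rw [hcm]
  set z : ℂ := Complex.exp (θ * Complex.I) with hzdef
  have hz0 : z ≠ 0 := Complex.exp_ne_zero _
  have habs : ‖z‖ = 1 := Complex.norm_exp_ofReal_mul_I θ
  have hzs : z - (s:ℂ) ≠ 0 := by
    intro h
    have h2 : z = (s:ℂ) := sub_eq_zero.1 h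
    rw [h2, Complex.norm_real, Real.norm_eq_abs, abs_of_pos hs0] at habs; linarith
  have hden : 1 - (s:ℂ)*z ≠ 0 := ne_zero' hs0 hs1 habs.le
  have ha : z * z⁻¹ = 1 := mul_inv_cancel₀ hz0
  have hinv : Complex.exp (-(θ * Complex.I)) = z⁻¹ := by
    rw [hzdef, ← Complex.exp_neg]
  have hcosz : Complex.cos (θ:ℂ) = (z + z⁻¹)/2 := by
    rw [Complex.cos, neg_mul, hinv, ← hzdef]
  have hsinz : ((Real.sin θ : ℝ) : ℂ) = (z⁻¹ - z) * Complex.I / 2 := by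
    rw [Complex.ofReal_sin, Complex.sin, neg_mul, hinv, ← hzdef]
  have hφ : ((1 + s^2 - 2*s*Real.cos θ : ℝ) : ℂ) = (1 - (s:ℂ)*z) * (z - (s:ℂ)) / z := by
    push_cast
    rw [hcosz]
    simp only [div_eq_mul_inv, mul_inv, inv_inv, ← inv_pow]
    linear_combination (-(1 - (s:ℂ)*z + (s:ℂ)^2)) * ha
  rw [Complex.ofReal_div, Complex.ofReal_pow, hφ, hsinz]
  simp only [div_eq_mul_inv, mul_inv, inv_inv, ← inv_pow]
  linear_combination (-((Complex.I*Complex.I/4) * z * (z - (s:ℂ))⁻¹ * (1 - (s:ℂ)*z)⁻¹ *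
    Complex.log (1 - (s:ℂ)*z) * ((2 - z^2)*(1 + z*z⁻¹) - 2))) * ha
end MPLogAux

open MPLogAux

theorem stmt2 (y : ℝ) (hy : y ∈ Set.Ioo (0 : ℝ) 1)
    (a b : ℝ) (ha : a = (1 - Real.sqrt y) ^ 2) (hb : b = (1 + Real.sqrt y) ^ 2) :
    ∫ x in a..b, Real.log x * (Real.sqrt ((b - x) * (x - a)) / (2 * Real.pi * x * y)) =
      -1 + ((y - 1) / y) * Real.log (1 - y) := by
  obtain ⟨hy0, hy1⟩ := hy
  set s : ℝ := Real.sqrt y with hsdef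
  have hs0 : 0 < s := Real.sqrt_pos.2 hy0
  have hys : y = s^2 := (Real.sq_sqrt hy0.le).symm
  have hs1 : s < 1 := by nlinarith [Real.sq_sqrt hy0.le]
  have hπ : (0:ℝ) < π := Real.pi_pos
  -- the trigonometric density
  set φ : ℝ → ℝ := fun θ => 1 + s^2 - 2*s*Real.cos θ with hφdef
  have hφpos : ∀ θ, 0 < φ θ := by
    intro θ
    have h1 := Real.cos_le_one θ
    have h2 := Real.neg_one_le_cos θ
    simp only [hφdef]
    nlinarith
  set G : ℝ → ℝ := fun θ => (Real.sin θ)^2 / φ θ * Real.log (φ θ) with hGdef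
  have hφc : Continuous φ :=
    continuous_const.sub (continuous_const.mul Real.continuous_cos)
  have hGcont : Continuous G := by
    have hlog : Continuous fun θ => Real.log (φ θ) :=
      continuous_iff_continuousAt.2 fun θ =>
        (Real.continuousAt_log (hφpos θ).ne').comp hφc.continuousAt
    exact ((Real.continuous_sin.pow 2).div hφc fun θ => (hφpos θ).ne').mul hlog
  -- Step 1 : substitution x = φ θ
  have hsub : (∫ x in a..b, Real.log x * (Real.sqrt ((b - x) * (x - a)) / (2 * π * x * y)))
      = ∫ θ in (0:ℝ)..π, (2*s*Real.sin θ) •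
          (Real.log (φ θ) * (Real.sqrt ((b - φ θ) * (φ θ - a)) / (2 * π * (φ θ) * y))) := by
    have hder : ∀ x ∈ uIcc (0:ℝ) π, HasDerivAt φ (2*s*Real.sin x) x := by
      intro x _
      have h := ((Real.hasDerivAt_cos x).const_mul (2*s)).const_sub (1+s^2)
      have h2 : -(2*s*(-Real.sin x)) = 2*s*Real.sin x := by ring
      rw [h2] at h
      exact h
    have hcont : ContinuousOn (fun θ => 2*s*Real.sin θ) (uIcc (0:ℝ) π) :=
      (continuous_const.mul Real.continuous_sin).continuousOn
    have himg : φ '' (uIcc (0:ℝ) π) ⊆ {x : ℝ | 0 < x} := by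
      rintro x ⟨θ, _, rfl⟩; exact hφpos θ
    have hgcont : ContinuousOn (fun x => Real.log x * (Real.sqrt ((b - x) * (x - a)) / (2 * π * x * y)))
        (φ '' (uIcc (0:ℝ) π)) := by
      refine ContinuousOn.mono ?_ himg
      refine ContinuousOn.mul (Real.continuousOn_log.mono ?_) ?_
      · intro x hx; exact fun h => absurd h (ne_of_gt hx)
      · refine ContinuousOn.div ?_ ?_ ?_
        · exact (Real.continuous_sqrt.comp
            ((continuous_const.sub continuous_id).mul
              (continuous_id.sub continuous_const))).continuousOn
        · exact ((continuous_const.mul continuous_id).mul continuous_const).continuousOn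
        · intro x hx
          have hx' : 0 < x := hx
          positivity
    have key := intervalIntegral.integral_comp_smul_deriv' hder hcont hgcont
    have hφ0 : φ 0 = a := by simp only [hφdef, Real.cos_zero, ha]; ring
    have hφπ : φ π = b := by simp only [hφdef, Real.cos_pi, hb]; ring
    rw [hφ0, hφπ] at key
    rw [← key]
    refine intervalIntegral.integral_congr fun θ _ => ?_
    simp [Function.comp]
  -- Step 2 : simplify the integrand
  have hsimp : (∫ θ in (0:ℝ)..π, (2*s*Real.sin θ) •
          (Real.log (φ θ) * (Real.sqrt ((b - φ θ) * (φ θ - a)) / (2 * π * (φ θ) * y))))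
      = ∫ θ in (0:ℝ)..π, (2/π) * G θ := by
    refine intervalIntegral.integral_congr fun θ hθ => ?_
    rw [uIcc_of_le hπ.le] at hθ
    have hsin : 0 ≤ Real.sin θ := Real.sin_nonneg_of_nonneg_of_le_pi hθ.1 hθ.2
    have hsq : (b - φ θ) * (φ θ - a) = (2*s*Real.sin θ)^2 := by
      simp only [hφdef, ha, hb, hys]
      linear_combination (-(4*s^2)) * (Real.sin_sq_add_cos_sq θ)
    rw [hsq, Real.sqrt_sq (by positivity)]
    have hss : s * s⁻¹ = 1 := mul_inv_cancel₀ hs0.ne'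
    simp only [hGdef, hφdef, smul_eq_mul, hys]
    simp only [div_eq_mul_inv, mul_inv, ← inv_pow]
    linear_combination (2*Real.sin θ^2*Real.log (1+s^2-2*s*Real.cos θ)*(π:ℝ)⁻¹*
      ((1+s^2-2*s*Real.cos θ)⁻¹)*(1+s*s⁻¹)) * hss
  -- Step 3 : reflection to double the interval
  have hrefl : ∀ x, G (2*π - x) = G x := by
    intro x
    simp only [hGdef, hφdef, Real.cos_two_pi_sub, Real.sin_two_pi_sub, neg_sq]
  have hdouble : (∫ θ in (0:ℝ)..(2*π), G θ) = 2 * ∫ θ in (0:ℝ)..π, G θ := by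
    have h1 : (∫ θ in (0:ℝ)..π, G θ) + (∫ θ in π..(2*π), G θ) = ∫ θ in (0:ℝ)..(2*π), G θ :=
      intervalIntegral.integral_add_adjacent_intervals
        (hGcont.intervalIntegrable _ _) (hGcont.intervalIntegrable _ _)
    have h2 : (∫ θ in π..(2*π), G θ) = ∫ θ in (0:ℝ)..π, G θ := by
      have h3 := intervalIntegral.integral_comp_sub_left (a := 0) (b := π) G (2*π)
      simp only [hrefl] at h3
      have hb1 : 2*π - π = π := by ring
      have hb2 : 2*π - 0 = 2*π := by ring
      rw [hb1, hb2] at h3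
      exact h3.symm
    linarith [h1, h2]
  -- Step 4 : the complex bridge
  set g₁ : ℝ → ℂ := fun θ => (((Real.sin θ)^2 / (1 + s^2 - 2*s*Real.cos θ) : ℝ) : ℂ)
      * Complex.log (1 - (s:ℂ) * Complex.exp (θ * Complex.I)) with hg₁def
  set g₂ : ℝ → ℂ := fun θ => (((Real.sin θ)^2 / (1 + s^2 - 2*s*Real.cos θ) : ℝ) : ℂ)
      * Complex.log (1 - (s:ℂ) * Complex.exp (-(θ * Complex.I))) with hg₂def
  have habs1 : ∀ θ : ℝ, ‖Complex.exp (θ * Complex.I)‖ = 1 := fun θ =>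
    Complex.norm_exp_ofReal_mul_I θ
  have habs2 : ∀ θ : ℝ, ‖Complex.exp (-(θ * Complex.I))‖ = 1 := by
    intro θ
    have : -((θ:ℂ) * Complex.I) = ((-θ : ℝ) : ℂ) * Complex.I := by push_cast; ring
    rw [this, Complex.norm_exp_ofReal_mul_I]
  have hratio : Continuous fun θ : ℝ => ((Real.sin θ)^2 / (1 + s^2 - 2*s*Real.cos θ) : ℝ) :=
    (Real.continuous_sin.pow 2).div hφc fun θ => (hφpos θ).ne'
  have hg₁cont : Continuous g₁ := by
    refine (Complex.continuous_ofReal.comp hratio).mul ?_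
    refine continuous_iff_continuousAt.2 fun θ => ?_
    refine ContinuousAt.comp (continuousAt_clog ?_) ?_
    · exact Complex.mem_slitPlane_iff.2 (Or.inl (re_pos hs0 hs1 (habs1 θ).le))
    · exact (continuous_const.sub (continuous_const.mul (Complex.continuous_exp.comp
        (Complex.continuous_ofReal.mul continuous_const)))).continuousAt
  have hg₂cont : Continuous g₂ := by
    refine (Complex.continuous_ofReal.comp hratio).mul ?_
    refine continuous_iff_continuousAt.2 fun θ => ?_
    refine ContinuousAt.comp (continuousAt_clog ?_) ?_
    · exact Complex.mem_slitPlane_iff.2 (Or.inl (re_pos hs0 hs1 (habs2 θ).le))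
    · exact (continuous_const.sub (continuous_const.mul (Complex.continuous_exp.comp
        ((Complex.continuous_ofReal.mul continuous_const).neg)))).continuousAt
  have hbridge : ∀ θ : ℝ, ((G θ : ℝ) : ℂ) = g₁ θ + g₂ θ := by
    intro θ
    set w : ℂ := 1 - (s:ℂ) * Complex.exp (θ * Complex.I) with hwdef
    have hw_re : 0 < w.re := re_pos hs0 hs1 (habs1 θ).le
    have harg : w.arg ≠ π := by
      rw [Ne, Complex.arg_eq_pi_iff]
      rintro ⟨h1, -⟩; linarith
    have hconj : (starRingEnd ℂ) w = 1 - (s:ℂ) * Complex.exp (-(θ * Complex.I)) := by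
      simp only [hwdef, map_sub, map_one, map_mul, Complex.conj_ofReal, ← Complex.exp_conj]
      congr 2
      simp [Complex.conj_I]
    have hns : Complex.normSq w = φ θ := by
      have h1 : w.re = 1 - s * Real.cos θ := by
        simp [hwdef, Complex.exp_ofReal_mul_I_re]
      have h2 : w.im = -(s * Real.sin θ) := by
        simp [hwdef, Complex.exp_ofReal_mul_I_im]
      rw [Complex.normSq_apply, h1, h2]
      simp only [hφdef]
      linear_combination (s^2) * (Real.sin_sq_add_cos_sq θ)
    have hlogsum : ((Real.log (φ θ) : ℝ) : ℂ) = Complex.log w + (starRingEnd ℂ) (Complex.log w) := by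
      rw [Complex.add_conj, Complex.log_re]
      have : Real.log (φ θ) = 2 * Real.log (‖w‖) := by
        rw [← hns, ← Complex.sq_norm, ← Real.rpow_natCast, Real.log_rpow]
        · norm_num
        · have : w ≠ 0 := by
            intro h; rw [h] at hw_re; simp at hw_re
          exact norm_pos_iff.2 this
      rw [this]
    have : ((G θ : ℝ) : ℂ) = (((Real.sin θ)^2 / φ θ : ℝ) : ℂ) * ((Real.log (φ θ) : ℝ) : ℂ) := by
      simp only [hGdef]; push_cast; ring
    rw [this, hlogsum, ← Complex.log_conj _ harg, hconj]
    simp only [hg₁def, hg₂def, hφdef]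
    ring
  -- reflection for g₂
  have hg₂g₁ : (∫ θ in (0:ℝ)..(2*π), g₂ θ) = ∫ θ in (0:ℝ)..(2*π), g₁ θ := by
    have h3 := intervalIntegral.integral_comp_sub_left (a := 0) (b := 2*π) g₂ (2*π)
    have hpt : ∀ x : ℝ, g₂ (2*π - x) = g₁ x := by
      intro x
      simp only [hg₂def, hg₁def, Real.cos_two_pi_sub, Real.sin_two_pi_sub, neg_sq]
      congr 2
      have h4 : -(((2*π - x : ℝ) : ℂ) * Complex.I) = (x:ℂ) * Complex.I - 2*(π:ℂ)*Complex.I := by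
        push_cast; ring
      rw [h4, Complex.exp_sub, Complex.exp_two_pi_mul_I, div_one]
    simp only [hpt] at h3
    rw [h3]
    norm_num
  -- put it together
  have hsum : ((∫ θ in (0:ℝ)..(2*π), G θ : ℝ) : ℂ) = 2 * ∫ θ in (0:ℝ)..(2*π), g₁ θ := by
    rw [← intervalIntegral.integral_ofReal]
    calc (∫ θ in (0:ℝ)..(2*π), ((G θ : ℝ) : ℂ))
        = ∫ θ in (0:ℝ)..(2*π), (g₁ θ + g₂ θ) := by
          refine intervalIntegral.integral_congr fun θ _ => hbridge θ
      _ = (∫ θ in (0:ℝ)..(2*π), g₁ θ) + ∫ θ in (0:ℝ)..(2*π), g₂ θ :=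
          intervalIntegral.integral_add (hg₁cont.intervalIntegrable _ _)
            (hg₂cont.intervalIntegrable _ _)
      _ = 2 * ∫ θ in (0:ℝ)..(2*π), g₁ θ := by rw [hg₂g₁]; ring
  have hval : (∫ θ in (0:ℝ)..(2*π), g₁ θ)
      = ((-(π/2) * (1 + (1 - s^2) * Real.log (1 - s^2) / s^2) : ℝ) : ℂ) := by
    exact (MPLogAux.param hs0 hs1).trans (MPLogAux.circle_eval hs0 hs1)
  have hGval : (∫ θ in (0:ℝ)..(2*π), G θ) = 2 * (-(π/2) * (1 + (1 - s^2) * Real.log (1 - s^2) / s^2)) := by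
    have := hsum
    rw [hval] at this
    exact_mod_cast this
  -- final computation
  rw [hsub, hsimp, intervalIntegral.integral_const_mul]
  have hhalf : (∫ θ in (0:ℝ)..π, G θ) = -(π/2) * (1 + (1 - s^2) * Real.log (1 - s^2) / s^2) := by
    rw [hdouble] at hGval; linarith
  rw [hhalf, hys]
  have hs2 : s^2 ≠ 0 := by positivity
  field_simp
  ring
end
end

section
/- Let y ∈ (0,1) and h₀ = √y. For f(x) = x − log x − 1, the value I₂(f) = (2πi)⁻¹ ∮_{|ξ|=1} f(|1+h₀ξ|²)·ξ⁻³ dξ, where on |ξ|=1 one interprets |1+h₀ξ|² = (1+h₀ξ)(1+h₀/ξ), equals y/2. -/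
open Complex Real

private lemma re_pos_of_norm_lt_one {w : ℂ} (hw : ‖w‖ < 1) : 0 < (1 + w).re := by
  have h1 : |w.re| ≤ ‖w‖ := Complex.abs_re_le_norm w
  have h2 : ‖w‖ < 1 := by exact hw
  have h3 := (abs_le.mp h1).1
  simp only [Complex.add_re, Complex.one_re]
  linarith

set_option maxHeartbeats 2000000 in
private lemma key (r : ℝ) (hr0 : 0 < r) (hr1 : r < 1) :
    (∮ ξ in C(0, 1),
        ((1 + (r : ℂ) * ξ) * (1 + (r : ℂ) / ξ)
          - Complex.log ((1 + (r : ℂ) * ξ) * (1 + (r : ℂ) / ξ)) - 1) / ξ ^ 3)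
      = ((r : ℂ) ^ 2 / 2) * (2 * (Real.pi : ℂ) * Complex.I) := by
  have hrC : (r : ℂ) ≠ 0 := Complex.ofReal_ne_zero.mpr hr0.ne'
  set F : ℂ → ℂ := fun w =>
    (-(r : ℂ) ^ 2 / 2) * (w ^ 2)⁻¹ + (-(r : ℂ)) * w⁻¹ + (-(r : ℂ) / 3) * (w ^ 3)⁻¹
      + (1 / 2) * (Complex.log (1 + (r : ℂ) * w) * (w ^ 2)⁻¹) + ((r : ℂ) / 2) * w⁻¹
      + (-(r : ℂ) ^ 2 / 2) * Complex.log (1 + (r : ℂ) * w)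
      + (1 / 2) * (Complex.log (1 + (r : ℂ) / w) * (w ^ 2)⁻¹)
      + (-(1 / (2 * (r : ℂ) ^ 2))) * Complex.log (1 + (r : ℂ) / w)
      + (1 / (2 * (r : ℂ))) * w⁻¹ + (-(1 / 4)) * (w ^ 2)⁻¹ with hFdef
  have main : ∀ z ∈ Metric.sphere (0 : ℂ) 1,
      (Complex.log ((1 + (r : ℂ) * z) * (1 + (r : ℂ) / z))
          = Complex.log (1 + (r : ℂ) * z) + Complex.log (1 + (r : ℂ) / z)) ∧
      HasDerivWithinAt F
        (((1 + (r : ℂ) * z) * (1 + (r : ℂ) / z) - Complex.log (1 + (r : ℂ) * z)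
            - Complex.log (1 + (r : ℂ) / z) - 1) / z ^ 3 - ((r : ℂ) ^ 2 / 2) * z⁻¹)
        (Metric.sphere (0 : ℂ) 1) z ∧
      ContinuousAt (fun z : ℂ =>
        ((1 + (r : ℂ) * z) * (1 + (r : ℂ) / z) - Complex.log (1 + (r : ℂ) * z)
            - Complex.log (1 + (r : ℂ) / z) - 1) / z ^ 3) z := by
    intro z hz
    have hzn : ‖z‖ = 1 := mem_sphere_zero_iff_norm.mp hz
    have hz0 : z ≠ 0 := by
      intro h; rw [h] at hzn; simp at hzn
    have hn1 : ‖(r : ℂ) * z‖ < 1 := by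
      rw [norm_mul, hzn, mul_one, Complex.norm_real, Real.norm_eq_abs, abs_of_pos hr0]
      exact hr1
    have hn2 : ‖(r : ℂ) / z‖ < 1 := by
      rw [norm_div, hzn, div_one, Complex.norm_real, Real.norm_eq_abs, abs_of_pos hr0]
      exact hr1
    have hs1 : (1 + (r : ℂ) * z) ∈ Complex.slitPlane := Complex.mem_slitPlane_of_norm_lt_one hn1
    have hs2 : (1 + (r : ℂ) / z) ∈ Complex.slitPlane := Complex.mem_slitPlane_of_norm_lt_one hn2
    have hne1 : (1 + (r : ℂ) * z) ≠ 0 := Complex.slitPlane_ne_zero hs1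
    have hne2 : (1 + (r : ℂ) / z) ≠ 0 := Complex.slitPlane_ne_zero hs2
    have hre1 : 0 < (1 + (r : ℂ) * z).re := re_pos_of_norm_lt_one hn1
    have hre2 : 0 < (1 + (r : ℂ) / z).re := re_pos_of_norm_lt_one hn2
    have harg1 : |Complex.arg (1 + (r : ℂ) * z)| < π / 2 :=
      Complex.abs_arg_lt_pi_div_two_iff.mpr (Or.inl hre1)
    have harg2 : |Complex.arg (1 + (r : ℂ) / z)| < π / 2 :=
      Complex.abs_arg_lt_pi_div_two_iff.mpr (Or.inl hre2)
    have hlog : Complex.log ((1 + (r : ℂ) * z) * (1 + (r : ℂ) / z))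
        = Complex.log (1 + (r : ℂ) * z) + Complex.log (1 + (r : ℂ) / z) := by
      apply Complex.log_mul hne1 hne2
      constructor
      · have := (abs_lt.mp harg1).1; have := (abs_lt.mp harg2).1; linarith
      · have := (abs_lt.mp harg1).2; have := (abs_lt.mp harg2).2; linarith
    have hi : HasDerivAt (fun w : ℂ => w⁻¹) (-(z ^ 2)⁻¹) z := hasDerivAt_inv hz0
    have hi2 : HasDerivAt (fun w : ℂ => (w ^ 2)⁻¹) (-((2 : ℕ) * z ^ (2 - 1)) / (z ^ 2) ^ 2) z :=
      (hasDerivAt_pow 2 z).inv (pow_ne_zero 2 hz0)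
    have hi3 : HasDerivAt (fun w : ℂ => (w ^ 3)⁻¹) (-((3 : ℕ) * z ^ (3 - 1)) / (z ^ 3) ^ 2) z :=
      (hasDerivAt_pow 3 z).inv (pow_ne_zero 3 hz0)
    have h1 : HasDerivAt (fun w : ℂ => 1 + (r : ℂ) * w) ((r : ℂ)) z := by
      simpa using (hasDerivAt_id' (𝕜 := ℂ) (x := z)).const_mul (r : ℂ) |>.const_add 1
    have h2 : HasDerivAt (fun w : ℂ => 1 + (r : ℂ) / w) ((r : ℂ) * -(z ^ 2)⁻¹) z := by
      simpa [div_eq_mul_inv] using (hi.const_mul (r : ℂ)).const_add 1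
    have hL : HasDerivAt (fun w : ℂ => Complex.log (1 + (r : ℂ) * w))
        ((r : ℂ) / (1 + (r : ℂ) * z)) z := h1.clog hs1
    have hM : HasDerivAt (fun w : ℂ => Complex.log (1 + (r : ℂ) / w))
        (((r : ℂ) * -(z ^ 2)⁻¹) / (1 + (r : ℂ) / z)) z := h2.clog hs2
    have hzr : z + (r : ℂ) ≠ 0 := by
      intro h
      apply hne2
      have e : (1 : ℂ) + (r : ℂ) / z = (z + (r : ℂ)) / z := by field_simp
      rw [e, h, zero_div]
    have hzr' : (r : ℂ) + z ≠ 0 := by rwa [add_comm] at hzr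
    have hQ : z ^ 4 * (1 + (r : ℂ) * z) * (z + (r : ℂ)) ≠ 0 :=
      mul_ne_zero (mul_ne_zero (pow_ne_zero _ hz0) hne1) hzr
    have e : (1 : ℂ) + (r : ℂ) / z = (z + (r : ℂ)) / z := by field_simp
    have hQ2 : (2 * (r : ℂ) * (z ^ 4 * (1 + (r : ℂ) * z) * (z + (r : ℂ)))) ≠ 0 :=
      mul_ne_zero (mul_ne_zero two_ne_zero hrC) hQ
    have hd1 : ((r:ℂ) * z ^ 7 * 2 + z ^ 6 * 2) ≠ 0 := by
      have e2 : ((r:ℂ) * z ^ 7 * 2 + z ^ 6 * 2) = 2 * z ^ 6 * (1 + (r:ℂ) * z) := by ring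
      rw [e2]; exact mul_ne_zero (mul_ne_zero two_ne_zero (pow_ne_zero _ hz0)) hne1
    have hd2 : ((r:ℂ) * z ^ 8 * 2 + z ^ 9 * 2) ≠ 0 := by
      have e2 : ((r:ℂ) * z ^ 8 * 2 + z ^ 9 * 2) = 2 * z ^ 8 * ((r:ℂ) + z) := by ring
      rw [e2]; exact mul_ne_zero (mul_ne_zero two_ne_zero (pow_ne_zero _ hz0)) hzr'
    have u1 : HasDerivAt (fun w : ℂ => (-(r : ℂ) ^ 2 / 2) * (w ^ 2)⁻¹)
        ((2 * (r : ℂ) ^ 3 * z * (1 + (r : ℂ) * z) * (z + (r : ℂ))) / (2 * (r : ℂ) * (z ^ 4 * (1 + (r : ℂ) * z) * (z + (r : ℂ))))) z := by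
      refine HasDerivAt.congr_deriv (hi2.const_mul (-(r : ℂ) ^ 2 / 2)) ?_
      symm
      rw [div_eq_iff hQ2]
      set L := Complex.log (1 + (r : ℂ) * z) with hLs
      set M := Complex.log (1 + (r : ℂ) / z) with hMs
      field_simp [hd1, hd2]
      ring
    have u2 : HasDerivAt (fun w : ℂ => (-(r : ℂ)) * w⁻¹)
        ((2 * (r : ℂ) ^ 2 * z ^ 2 * (1 + (r : ℂ) * z) * (z + (r : ℂ))) / (2 * (r : ℂ) * (z ^ 4 * (1 + (r : ℂ) * z) * (z + (r : ℂ))))) z := by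
      refine HasDerivAt.congr_deriv (hi.const_mul (-(r : ℂ))) ?_
      symm
      rw [div_eq_iff hQ2]
      set L := Complex.log (1 + (r : ℂ) * z) with hLs
      set M := Complex.log (1 + (r : ℂ) / z) with hMs
      field_simp [hd1, hd2]
    have u3 : HasDerivAt (fun w : ℂ => (-(r : ℂ) / 3) * (w ^ 3)⁻¹)
        ((2 * (r : ℂ) ^ 2 * (1 + (r : ℂ) * z) * (z + (r : ℂ))) / (2 * (r : ℂ) * (z ^ 4 * (1 + (r : ℂ) * z) * (z + (r : ℂ))))) z := by
      refine HasDerivAt.congr_deriv (hi3.const_mul (-(r : ℂ) / 3)) ?_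
      symm
      rw [div_eq_iff hQ2]
      set L := Complex.log (1 + (r : ℂ) * z) with hLs
      set M := Complex.log (1 + (r : ℂ) / z) with hMs
      field_simp [hd1, hd2]
      ring
    have u4 : HasDerivAt (fun w : ℂ => ((1 : ℂ) / 2) * (Complex.log (1 + (r : ℂ) * w) * (w ^ 2)⁻¹))
        (((r : ℂ) ^ 2 * z ^ 2 * (z + (r : ℂ)) - 2 * (r : ℂ) * Complex.log (1 + (r : ℂ) * z) * z * (1 + (r : ℂ) * z) * (z + (r : ℂ))) / (2 * (r : ℂ) * (z ^ 4 * (1 + (r : ℂ) * z) * (z + (r : ℂ))))) z := by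
      refine HasDerivAt.congr_deriv ((hL.mul hi2).const_mul ((1 : ℂ) / 2)) ?_
      symm
      rw [div_eq_iff hQ2]
      set L := Complex.log (1 + (r : ℂ) * z) with hLs
      set M := Complex.log (1 + (r : ℂ) / z) with hMs
      field_simp [hd1, hd2]
      norm_num
      ring
    have u5 : HasDerivAt (fun w : ℂ => ((r : ℂ) / 2) * w⁻¹)
        ((-(r : ℂ) ^ 2 * z ^ 2 * (1 + (r : ℂ) * z) * (z + (r : ℂ))) / (2 * (r : ℂ) * (z ^ 4 * (1 + (r : ℂ) * z) * (z + (r : ℂ))))) z := by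
      refine HasDerivAt.congr_deriv (hi.const_mul ((r : ℂ) / 2)) ?_
      symm
      rw [div_eq_iff hQ2]
      set L := Complex.log (1 + (r : ℂ) * z) with hLs
      set M := Complex.log (1 + (r : ℂ) / z) with hMs
      field_simp [hd1, hd2]
    have u6 : HasDerivAt (fun w : ℂ => (-(r : ℂ) ^ 2 / 2) * Complex.log (1 + (r : ℂ) * w))
        ((-(r : ℂ) ^ 4 * z ^ 4 * (z + (r : ℂ))) / (2 * (r : ℂ) * (z ^ 4 * (1 + (r : ℂ) * z) * (z + (r : ℂ))))) z := by
      refine HasDerivAt.congr_deriv (hL.const_mul (-(r : ℂ) ^ 2 / 2)) ?_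
      symm
      rw [div_eq_iff hQ2]
      set L := Complex.log (1 + (r : ℂ) * z) with hLs
      set M := Complex.log (1 + (r : ℂ) / z) with hMs
      field_simp [hd1, hd2]
    have u7 : HasDerivAt (fun w : ℂ => ((1 : ℂ) / 2) * (Complex.log (1 + (r : ℂ) / w) * (w ^ 2)⁻¹))
        ((-(r : ℂ) ^ 2 * z * (1 + (r : ℂ) * z) - 2 * (r : ℂ) * Complex.log (1 + (r : ℂ) / z) * z * (1 + (r : ℂ) * z) * (z + (r : ℂ))) / (2 * (r : ℂ) * (z ^ 4 * (1 + (r : ℂ) * z) * (z + (r : ℂ))))) z := by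
      refine HasDerivAt.congr_deriv ((hM.mul hi2).const_mul ((1 : ℂ) / 2)) ?_
      symm
      rw [div_eq_iff hQ2]
      set L := Complex.log (1 + (r : ℂ) * z) with hLs
      set M := Complex.log (1 + (r : ℂ) / z) with hMs
      rw [e]
      field_simp [hd1, hd2]
      norm_num
      ring
    have u8 : HasDerivAt (fun w : ℂ => (-(1 / (2 * (r : ℂ) ^ 2))) * Complex.log (1 + (r : ℂ) / w))
        ((z ^ 3 * (1 + (r : ℂ) * z)) / (2 * (r : ℂ) * (z ^ 4 * (1 + (r : ℂ) * z) * (z + (r : ℂ))))) z := by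
      refine HasDerivAt.congr_deriv (hM.const_mul (-(1 / (2 * (r : ℂ) ^ 2)))) ?_
      symm
      rw [div_eq_iff hQ2]
      set L := Complex.log (1 + (r : ℂ) * z) with hLs
      set M := Complex.log (1 + (r : ℂ) / z) with hMs
      rw [e]
      field_simp [hd1, hd2]
    have u9 : HasDerivAt (fun w : ℂ => (1 / (2 * (r : ℂ))) * w⁻¹)
        ((-z ^ 2 * (1 + (r : ℂ) * z) * (z + (r : ℂ))) / (2 * (r : ℂ) * (z ^ 4 * (1 + (r : ℂ) * z) * (z + (r : ℂ))))) z := by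
      refine HasDerivAt.congr_deriv (hi.const_mul (1 / (2 * (r : ℂ)))) ?_
      symm
      rw [div_eq_iff hQ2]
      set L := Complex.log (1 + (r : ℂ) * z) with hLs
      set M := Complex.log (1 + (r : ℂ) / z) with hMs
      field_simp [hd1, hd2]
    have u10 : HasDerivAt (fun w : ℂ => (-(1 / 4 : ℂ)) * (w ^ 2)⁻¹)
        (((r : ℂ) * z * (1 + (r : ℂ) * z) * (z + (r : ℂ))) / (2 * (r : ℂ) * (z ^ 4 * (1 + (r : ℂ) * z) * (z + (r : ℂ))))) z := by
      refine HasDerivAt.congr_deriv (hi2.const_mul (-(1 / 4 : ℂ))) ?_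
      symm
      rw [div_eq_iff hQ2]
      set L := Complex.log (1 + (r : ℂ) * z) with hLs
      set M := Complex.log (1 + (r : ℂ) / z) with hMs
      field_simp [hd1, hd2]
      ring
    have hsum := ((((((((u1.add u2).add u3).add u4).add u5).add u6).add u7).add u8).add
      u9).add u10
    have hF' : HasDerivAt F
        (((1 + (r : ℂ) * z) * (1 + (r : ℂ) / z) - Complex.log (1 + (r : ℂ) * z)
            - Complex.log (1 + (r : ℂ) / z) - 1) / z ^ 3 - ((r : ℂ) ^ 2 / 2) * z⁻¹) z := by
      refine HasDerivAt.congr_deriv hsum ?_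
      symm
      simp only [← add_div]
      rw [eq_div_iff hQ2]
      set L := Complex.log (1 + (r : ℂ) * z) with hLs
      set M := Complex.log (1 + (r : ℂ) / z) with hMs
      rw [e]
      field_simp
      ring
    refine ⟨hlog, hF'.hasDerivWithinAt, ?_⟩
    exact ((((h1.continuousAt.mul h2.continuousAt).sub hL.continuousAt).sub
      hM.continuousAt).sub continuousAt_const).div
      (hasDerivAt_pow 3 z).continuousAt (pow_ne_zero 3 hz0)
  -- split the log inside the integral
  have hcongr : (∮ ξ in C(0, 1),
      ((1 + (r : ℂ) * ξ) * (1 + (r : ℂ) / ξ)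
        - Complex.log ((1 + (r : ℂ) * ξ) * (1 + (r : ℂ) / ξ)) - 1) / ξ ^ 3)
      = ∮ ξ in C(0, 1),
        ((1 + (r : ℂ) * ξ) * (1 + (r : ℂ) / ξ) - Complex.log (1 + (r : ℂ) * ξ)
          - Complex.log (1 + (r : ℂ) / ξ) - 1) / ξ ^ 3 := by
    apply circleIntegral.integral_congr (by norm_num)
    intro z hz
    simp only
    rw [(main z hz).1]
    ring
  have hzero : (∮ z in C(0, 1),
      (((1 + (r : ℂ) * z) * (1 + (r : ℂ) / z) - Complex.log (1 + (r : ℂ) * z)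
          - Complex.log (1 + (r : ℂ) / z) - 1) / z ^ 3 - ((r : ℂ) ^ 2 / 2) * z⁻¹)) = 0 :=
    circleIntegral.integral_eq_zero_of_hasDerivWithinAt (by norm_num)
      (fun z hz => (main z hz).2.1)
  have hint1 : CircleIntegrable (fun z : ℂ =>
      ((1 + (r : ℂ) * z) * (1 + (r : ℂ) / z) - Complex.log (1 + (r : ℂ) * z)
          - Complex.log (1 + (r : ℂ) / z) - 1) / z ^ 3) 0 1 :=
    ContinuousOn.circleIntegrable (by norm_num)
      (fun z hz => ((main z hz).2.2).continuousWithinAt)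
  have hint2 : CircleIntegrable (fun z : ℂ => ((r : ℂ) ^ 2 / 2) * z⁻¹) 0 1 := by
    apply ContinuousOn.circleIntegrable (by norm_num)
    intro z hz
    have hzn : ‖z‖ = 1 := mem_sphere_zero_iff_norm.mp hz
    have hz0 : z ≠ 0 := by intro h; rw [h] at hzn; simp at hzn
    exact ((continuousAt_const.mul
      (continuousAt_id.inv₀ hz0)).continuousWithinAt)
  have hinv : (∮ z in C(0, 1), ((r : ℂ) ^ 2 / 2) * z⁻¹)
      = ((r : ℂ) ^ 2 / 2) * (2 * (Real.pi : ℂ) * Complex.I) := by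
    have hsm := circleIntegral.integral_smul ((r : ℂ) ^ 2 / 2) (fun z : ℂ => z⁻¹) 0 1
    simp only [smul_eq_mul] at hsm
    rw [hsm]
    congr 1
    have := circleIntegral.integral_sub_inv_of_mem_ball
      (Metric.mem_ball_self (by norm_num : (0 : ℝ) < 1) : (0 : ℂ) ∈ Metric.ball 0 1)
    simpa using this
  have hsub := circleIntegral.integral_sub hint1 hint2
  rw [hsub] at hzero
  rw [hcongr]
  rw [hinv] at hzero
  linear_combination hzero

theorem stmt18 (y : ℝ) (hy : y ∈ Set.Ioo (0 : ℝ) 1)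
    (h₀ : ℂ) (hh₀ : h₀ = (Real.sqrt y : ℂ)) :
    (1 / (2 * (Real.pi : ℂ) * Complex.I)) *
        (∮ ξ in C(0, 1),
          ((1 + h₀ * ξ) * (1 + h₀ / ξ) - Complex.log ((1 + h₀ * ξ) * (1 + h₀ / ξ)) - 1) / ξ ^ 3)
      = (y : ℂ) / 2 := by
  obtain ⟨hy0, hy1⟩ := hy
  subst hh₀
  set r := Real.sqrt y with hr
  have hr0 : 0 < r := Real.sqrt_pos.mpr hy0
  have hr1 : r < 1 := by
    rw [hr, show (1 : ℝ) = Real.sqrt 1 by simp]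
    exact Real.sqrt_lt_sqrt hy0.le hy1
  rw [key r hr0 hr1]
  have hπ : (Real.pi : ℂ) ≠ 0 := Complex.ofReal_ne_zero.mpr Real.pi_ne_zero
  have hr2 : ((r : ℂ)) ^ 2 = (y : ℂ) := by
    rw [← Complex.ofReal_pow, Real.sq_sqrt hy0.le]
  rw [hr2]
  field_simp
end
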